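/- Let F be a field and let k ≥ 2 and q ≥ 2 be integers. Work in the polynomial ring over F in the variable ε and the variables x^{(u)}_0, x^{(u)}_1, …, x^{(u)}_q, x^{(u)}_{q+1} for u ∈ {1,…,k}, and define the big Coppersmith–Winograd k-tensor CW_q^k = Σ_{1≤u<v≤k} (Σ_{i=1}^q x^{(u)}_i·x^{(v)}_i)·Π_{w ∈ {1,…,k}\{u,v}} x^{(w)}_0 + Σ_{u=1}^k x^{(u)}_{q+1}·Π_{w ≠ u} x^{(w)}_0. Then there exists a polynomial E in ε and the x-variables such that Σ_{i=1}^q ε·Π_{u=1}^k (x^{(u)}_0 + ε²·x^{(u)}_i) − Π_{u=1}^k (x^{(u)}_0 + ε³·Σ_{i=1}^q x^{(u)}_i) + (1 − q·ε)·Π_{u=1}^k (x^{(u)}_0 + ε⁵·x^{(u)}_{q+1}) = ε⁵·CW_q^k + ε⁶·E. In particular, CW_q^k is an ε-degeneration of a sum of q+2 rank-one tensors, so its border rank is at most q+2. -/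
import Mathlib


open Finset

namespace CWk


section Key
variable {ι R : Type*} [CommRing R] [LinearOrder ι] [DecidableEq ι]

theorem key (c : R) (a b : ι → R) (s : Finset ι) :
    ∃ E : R, ∏ u ∈ s, (a u + c * b u) =
      (∏ u ∈ s, a u)
      + c * ∑ u ∈ s, b u * ∏ w ∈ s \ {u}, a w
      + c ^ 2 * ∑ u ∈ s, ∑ v ∈ s,
          (if u < v then b u * b v * ∏ w ∈ s \ {u, v}, a w else 0)
      + c ^ 3 * E := by
  classical
  induction s using Finset.induction_on with
  | empty => exact ⟨0, by simp⟩
  | @insert x t hx ih =>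
    obtain ⟨E, hE⟩ := ih
    have hxt : ∀ w ∈ t, x ≠ w := fun w hw h => hx (h ▸ hw)
    have d1 : insert x t \ ({x} : Finset ι) = t := by
      rw [insert_sdiff_of_mem _ (mem_singleton_self x), sdiff_singleton_eq_erase,
        erase_eq_of_notMem hx]
    have d2 : ∀ u ∈ t, insert x t \ ({u} : Finset ι) = insert x (t \ {u}) := by
      intro u hu
      exact insert_sdiff_of_notMem _ (by simp [hxt u hu])
    have d3 : ∀ v ∈ t, insert x t \ ({x, v} : Finset ι) = t \ {v} := by
      intro v hv
      rw [insert_sdiff_of_mem _ (mem_insert_self x {v}), show ({x, v} : Finset ι) = insert x {v}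
        from rfl, sdiff_insert, erase_eq_of_notMem (fun h => hx (mem_sdiff.1 h).1)]
    have d4 : ∀ u ∈ t, insert x t \ ({u, x} : Finset ι) = t \ {u} := by
      intro u hu
      rw [pair_comm]
      exact d3 u hu
    have d5 : ∀ u ∈ t, ∀ v ∈ t, insert x t \ ({u, v} : Finset ι) = insert x (t \ {u, v}) := by
      intro u hu v hv
      exact insert_sdiff_of_notMem _ (by simp [hxt u hu, hxt v hv])
    have hxd : ∀ u ∈ t, x ∉ t \ ({u} : Finset ι) := fun u _ h => hx (mem_sdiff.1 h).1
    have hxd2 : ∀ (u v : ι), x ∉ t \ ({u, v} : Finset ι) := fun u v h => hx (mem_sdiff.1 h).1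
    have hP : ∏ u ∈ insert x t, a u = a x * ∏ u ∈ t, a u := prod_insert hx
    have hL : ∑ u ∈ insert x t, b u * ∏ w ∈ insert x t \ {u}, a w
        = b x * ∏ u ∈ t, a u + a x * ∑ u ∈ t, b u * ∏ w ∈ t \ {u}, a w := by
      rw [sum_insert hx, d1]
      congr 1
      rw [mul_sum]
      refine sum_congr rfl fun u hu => ?_
      rw [d2 u hu, prod_insert (hxd u hu)]
      ring
    have hQ : (∑ u ∈ insert x t, ∑ v ∈ insert x t,
          if u < v then b u * b v * ∏ w ∈ insert x t \ {u, v}, a w else 0)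
        = b x * (∑ u ∈ t, b u * ∏ w ∈ t \ {u}, a w)
          + a x * ∑ u ∈ t, ∑ v ∈ t,
              (if u < v then b u * b v * ∏ w ∈ t \ {u, v}, a w else 0) := by
      rw [sum_insert hx]
      have hA : (∑ v ∈ insert x t, if x < v then b x * b v * ∏ w ∈ insert x t \ {x, v}, a w else 0)
          = ∑ v ∈ t, if x < v then b x * (b v * ∏ w ∈ t \ {v}, a w) else 0 := by
        rw [sum_insert hx, if_neg (lt_irrefl x), zero_add]
        refine sum_congr rfl fun v hv => ?_
        rw [d3 v hv, mul_assoc]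
      have hB : ∀ u ∈ t, (∑ v ∈ insert x t,
            if u < v then b u * b v * ∏ w ∈ insert x t \ {u, v}, a w else 0)
          = (if u < x then b x * (b u * ∏ w ∈ t \ {u}, a w) else 0)
            + ∑ v ∈ t, a x * (if u < v then b u * b v * ∏ w ∈ t \ {u, v}, a w else 0) := by
        intro u hu
        rw [sum_insert hx, d4 u hu]
        congr 1
        · split_ifs with h
          · ring
          · rfl
        · refine sum_congr rfl fun v hv => ?_
          rw [d5 u hu v hv, prod_insert (hxd2 u v)]
          split_ifs with h
          · ring
          · rw [mul_zero]
      rw [hA, sum_congr rfl hB, sum_add_distrib]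
      simp only [← mul_sum]
      have hC : (∑ v ∈ t, if x < v then b x * (b v * ∏ w ∈ t \ {v}, a w) else 0)
          + ∑ u ∈ t, (if u < x then b x * (b u * ∏ w ∈ t \ {u}, a w) else 0)
          = b x * ∑ u ∈ t, b u * ∏ w ∈ t \ {u}, a w := by
        rw [← sum_add_distrib, mul_sum]
        refine sum_congr rfl fun v hv => ?_
        rcases lt_or_gt_of_ne (hxt v hv) with h | h
        · rw [if_pos h, if_neg (asymm h), add_zero]
        · rw [if_neg (asymm h), if_pos h, zero_add]
      linear_combination hC
    refine ⟨b x * (∑ u ∈ t, ∑ v ∈ t,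
        (if u < v then b u * b v * ∏ w ∈ t \ {u, v}, a w else 0)) + a x * E + c * (b x * E), ?_⟩
    rw [prod_insert hx, hE, hP, hL, hQ]
    ring

end Key

variable (F : Type) [Field F] (k q : ℕ)

/-- The variable `x^{(u)}_j`, for `u ∈ {1,…,k}` and `j ∈ {0,1,…,q+1}`, viewed in the
polynomial ring over `F` that also contains the degeneration variable `ε`. -/
noncomputable def xv (u : Fin k) (j : Fin (q + 2)) :
    MvPolynomial (Option (Fin k × Fin (q + 2))) F :=
  MvPolynomial.X (some (u, j))

/-- The degeneration variable `ε`. -/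
noncomputable def eps : MvPolynomial (Option (Fin k × Fin (q + 2))) F :=
  MvPolynomial.X none

/-- The index `i ∈ {1,…,q}` inside `{0,…,q+1}`. -/
def midIdx (i : Fin q) : Fin (q + 2) := i.succ.castSucc

/-- The big Coppersmith–Winograd `k`-tensor
`CW_q^k = Σ_{u<v} (Σ_{i=1}^q x^{(u)}_i x^{(v)}_i)·Π_{w∉{u,v}} x^{(w)}_0
          + Σ_u x^{(u)}_{q+1}·Π_{w≠u} x^{(w)}_0`. -/
noncomputable def CW : MvPolynomial (Option (Fin k × Fin (q + 2))) F :=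
  (∑ u : Fin k, ∑ v : Fin k,
    if u < v then
      (∑ i : Fin q, xv F k q u (midIdx q i) * xv F k q v (midIdx q i)) *
        ∏ w ∈ univ \ {u, v}, xv F k q w 0
    else 0)
  + ∑ u : Fin k, xv F k q u (Fin.last (q + 1)) * ∏ w ∈ univ \ {u}, xv F k q w 0

/-- For `k, q ≥ 2` there exists a polynomial `E` such that
`Σ_{i=1}^q ε·Π_u (x^{(u)}_0 + ε²x^{(u)}_i) − Π_u (x^{(u)}_0 + ε³Σ_i x^{(u)}_i)
 + (1 − qε)·Π_u (x^{(u)}_0 + ε⁵x^{(u)}_{q+1}) = ε⁵·CW_q^k + ε⁶·E`;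
in particular `CW_q^k` is an `ε`-degeneration of a sum of `q+2` rank-one tensors. -/
theorem cw_degeneration (hk : 2 ≤ k) (hq : 2 ≤ q) :
    ∃ E : MvPolynomial (Option (Fin k × Fin (q + 2))) F,
      (∑ i : Fin q, eps F k q *
          ∏ u : Fin k, (xv F k q u 0 + (eps F k q) ^ 2 * xv F k q u (midIdx q i)))
      - (∏ u : Fin k,
          (xv F k q u 0 + (eps F k q) ^ 3 * ∑ i : Fin q, xv F k q u (midIdx q i)))
      + (1 - (q : MvPolynomial (Option (Fin k × Fin (q + 2))) F) * eps F k q) *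
          ∏ u : Fin k, (xv F k q u 0 + (eps F k q) ^ 5 * xv F k q u (Fin.last (q + 1)))
      = (eps F k q) ^ 5 * CW F k q + (eps F k q) ^ 6 * E := by
  classical
  have h1 : ∀ i : Fin q, ∃ E, (∏ u : Fin k, (xv F k q u 0 + (eps F k q) ^ 2 * xv F k q u (midIdx q i)))
      = (∏ u : Fin k, xv F k q u 0)
        + (eps F k q) ^ 2 * ∑ u : Fin k, xv F k q u (midIdx q i) * ∏ w ∈ univ \ {u}, xv F k q w 0
        + ((eps F k q) ^ 2) ^ 2 * ∑ u : Fin k, ∑ v : Fin k,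
            (if u < v then xv F k q u (midIdx q i) * xv F k q v (midIdx q i) *
              ∏ w ∈ univ \ {u, v}, xv F k q w 0 else 0)
        + ((eps F k q) ^ 2) ^ 3 * E := fun i => key _ _ _ univ
  choose E1 hE1 using h1
  obtain ⟨E2, hE2⟩ : ∃ E, (∏ u : Fin k,
        (xv F k q u 0 + (eps F k q) ^ 3 * ∑ i : Fin q, xv F k q u (midIdx q i)))
      = (∏ u : Fin k, xv F k q u 0)
        + (eps F k q) ^ 3 * ∑ u : Fin k,
            (∑ i : Fin q, xv F k q u (midIdx q i)) * ∏ w ∈ univ \ {u}, xv F k q w 0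
        + ((eps F k q) ^ 3) ^ 2 * ∑ u : Fin k, ∑ v : Fin k,
            (if u < v then (∑ i : Fin q, xv F k q u (midIdx q i)) *
              (∑ i : Fin q, xv F k q v (midIdx q i)) *
              ∏ w ∈ univ \ {u, v}, xv F k q w 0 else 0)
        + ((eps F k q) ^ 3) ^ 3 * E := key _ _ _ univ
  obtain ⟨E3, hE3⟩ : ∃ E, (∏ u : Fin k,
        (xv F k q u 0 + (eps F k q) ^ 5 * xv F k q u (Fin.last (q + 1))))
      = (∏ u : Fin k, xv F k q u 0)
        + (eps F k q) ^ 5 * ∑ u : Fin k,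
            xv F k q u (Fin.last (q + 1)) * ∏ w ∈ univ \ {u}, xv F k q w 0
        + ((eps F k q) ^ 5) ^ 2 * ∑ u : Fin k, ∑ v : Fin k,
            (if u < v then xv F k q u (Fin.last (q + 1)) * xv F k q v (Fin.last (q + 1)) *
              ∏ w ∈ univ \ {u, v}, xv F k q w 0 else 0)
        + ((eps F k q) ^ 5) ^ 3 * E := key _ _ _ univ
  have hswap1 : ∑ i : Fin q, ∑ u : Fin k, xv F k q u (midIdx q i) * ∏ w ∈ univ \ {u}, xv F k q w 0
      = ∑ u : Fin k, (∑ i : Fin q, xv F k q u (midIdx q i)) * ∏ w ∈ univ \ {u}, xv F k q w 0 := by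
    rw [sum_comm]
    exact sum_congr rfl fun u _ => (sum_mul _ _ _).symm
  have hswap2 : ∑ i : Fin q, ∑ u : Fin k, ∑ v : Fin k,
        (if u < v then xv F k q u (midIdx q i) * xv F k q v (midIdx q i) *
          ∏ w ∈ univ \ {u, v}, xv F k q w 0 else 0)
      = ∑ u : Fin k, ∑ v : Fin k,
        (if u < v then (∑ i : Fin q, xv F k q u (midIdx q i) * xv F k q v (midIdx q i)) *
          ∏ w ∈ univ \ {u, v}, xv F k q w 0 else 0) := by
    rw [sum_comm]
    refine sum_congr rfl fun u _ => ?_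
    rw [sum_comm]
    refine sum_congr rfl fun v _ => ?_
    by_cases h : u < v
    · simp only [if_pos h, sum_mul]
    · simp only [if_neg h, sum_const_zero]
  refine ⟨eps F k q * ∑ i : Fin q, E1 i
      - (∑ u : Fin k, ∑ v : Fin k,
          (if u < v then (∑ i : Fin q, xv F k q u (midIdx q i)) *
            (∑ i : Fin q, xv F k q v (midIdx q i)) *
            ∏ w ∈ univ \ {u, v}, xv F k q w 0 else 0))
      - (eps F k q) ^ 3 * E2
      - (q : MvPolynomial (Option (Fin k × Fin (q + 2))) F) *
          ∑ u : Fin k, xv F k q u (Fin.last (q + 1)) * ∏ w ∈ univ \ {u}, xv F k q w 0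
      + (1 - (q : MvPolynomial (Option (Fin k × Fin (q + 2))) F) * eps F k q) *
          ((eps F k q) ^ 4 * ∑ u : Fin k, ∑ v : Fin k,
            (if u < v then xv F k q u (Fin.last (q + 1)) * xv F k q v (Fin.last (q + 1)) *
              ∏ w ∈ univ \ {u, v}, xv F k q w 0 else 0)
           + (eps F k q) ^ 9 * E3), ?_⟩
  rw [hE2, hE3, CW]
  simp only [hE1, mul_add, sum_add_distrib, ← mul_sum, sum_const, card_univ, Fintype.card_fin,
    nsmul_eq_mul]
  linear_combination (eps F k q) ^ 3 * hswap1 + (eps F k q) ^ 5 * hswap2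

end CWk
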